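/- Let x0 < 0 and y_C = −(3|x0|/2)^{2/3}. Then the boundary of the normal Tricomi domain is D-starlike with respect to the vector field D = −3x ∂x − 2y ∂y; explicitly: (i) for y ∈ [y_C, 0], with x = 2x0 + (2/3)(−y)^{3/2} and n_AC = (1 − y)^{−1/2}(−1, −(−y)^{1/2}), one has ⟨(−3x, −2y), n_AC⟩ = 6 x0 (1 − y)^{−1/2} < 0; (ii) for y ∈ [y_C, 0], with x = −(2/3)(−y)^{3/2} and n_BC = (1 − y)^{−1/2}(1, −(−y)^{1/2}), one has ⟨(−3x, −2y), n_BC⟩ = 0; (iii) for x ∈ [2x0, 0], with y = g(x) and n_σ = (1/h(x)) (x − x0, (2/3) g(x)^2), one has ⟨(−3x, −2y), n_σ⟩ = −3 x x0 / h(x) ≤ 0. -/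
import Mathlib


open Set

lemma rpow_three_halves_of_nonpos {y : ℝ} (hy : y ≤ 0) :
    (-y) ^ ((3 : ℝ) / 2) = (-y) * (-y) ^ ((1 : ℝ) / 2) := by
  rcases eq_or_lt_of_le hy with rfl | hy'
  · simp [Real.zero_rpow]
  · rw [show (3 : ℝ) / 2 = 1 + 1 / 2 by norm_num,
      Real.rpow_add (by linarith), Real.rpow_one]

/-- The boundary of the normal Tricomi domain is `D`-starlike
with respect to `D = -3x ∂x - 2y ∂y`: explicit evaluation of the inner
products of `(-3x, -2y)` with the unit outer normals along `AC`, `BC`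
and the normal Tricomi curve `σ`. -/
theorem normal_tricomi_boundary_D_starlike
    (x0 : ℝ) (hx0 : x0 < 0)
    (yC : ℝ) (hyC : yC = -(3 * |x0| / 2) ^ ((2 : ℝ) / 3))
    (g h : ℝ → ℝ)
    (hg : ∀ x : ℝ, g x = (9 * x * (2 * x0 - x) / 4) ^ ((1 : ℝ) / 3))
    (hh : ∀ x : ℝ, h x = ((x - x0) ^ 2 + (4 / 9) * (g x) ^ 4) ^ ((1 : ℝ) / 2)) :
    -- (i) along AC, with x = 2x0 + (2/3)(-y)^(3/2)
    (∀ y ∈ Icc yC 0,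
      (-3 * (2 * x0 + (2 / 3) * (-y) ^ ((3 : ℝ) / 2))) * (-((1 - y) ^ (-(1 : ℝ) / 2))) +
        (-2 * y) * (-((1 - y) ^ (-(1 : ℝ) / 2) * (-y) ^ ((1 : ℝ) / 2)))
        = 6 * x0 * (1 - y) ^ (-(1 : ℝ) / 2) ∧
      6 * x0 * (1 - y) ^ (-(1 : ℝ) / 2) < 0) ∧
    -- (ii) along BC, with x = -(2/3)(-y)^(3/2)
    (∀ y ∈ Icc yC 0,
      (-3 * (-(2 / 3) * (-y) ^ ((3 : ℝ) / 2))) * ((1 - y) ^ (-(1 : ℝ) / 2)) +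
        (-2 * y) * (-((1 - y) ^ (-(1 : ℝ) / 2) * (-y) ^ ((1 : ℝ) / 2))) = 0) ∧
    -- (iii) along σ, with y = g x and n_σ = (1/h x) (x - x0, (2/3) g(x)^2)
    (∀ x ∈ Icc (2 * x0) 0,
      (-3 * x) * ((x - x0) / h x) + (-2 * g x) * ((2 / 3) * (g x) ^ 2 / h x)
        = -3 * x * x0 / h x ∧
      -3 * x * x0 / h x ≤ 0) := by
  refine ⟨fun y hy => ?_, fun y hy => ?_, fun x hx => ?_⟩
  · have hy0 : y ≤ 0 := hy.2
    rw [rpow_three_halves_of_nonpos hy0]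
    constructor
    · ring
    · have ht : (0 : ℝ) < (1 - y) ^ (-(1 : ℝ) / 2) :=
        Real.rpow_pos_of_pos (by linarith) _
      have : 6 * x0 < 0 := by linarith
      exact mul_neg_of_neg_of_pos this ht
  · rw [rpow_three_halves_of_nonpos hy.2]
    ring
  · have hx1 : 2 * x0 ≤ x := hx.1
    have hx2 : x ≤ 0 := hx.2
    have hb : 0 ≤ 9 * x * (2 * x0 - x) / 4 := by nlinarith
    have hg3 : g x ^ 3 = 9 * x * (2 * x0 - x) / 4 := by
      rw [hg x, ← Real.rpow_natCast _ 3, ← Real.rpow_mul hb]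
      norm_num
    constructor
    · have key : -3 * x * (x - x0) + (-2 * g x) * ((2 / 3) * g x ^ 2)
          = -3 * x * x0 := by linear_combination (-(4 : ℝ) / 3) * hg3
      calc (-3 * x) * ((x - x0) / h x) + (-2 * g x) * ((2 / 3) * (g x) ^ 2 / h x)
          = (-3 * x * (x - x0) + (-2 * g x) * ((2 / 3) * g x ^ 2)) / h x := by ring
        _ = -3 * x * x0 / h x := by rw [key]
    · apply div_nonpos_of_nonpos_of_nonneg
      · nlinarith
      · rw [hh x]
        apply Real.rpow_nonneg
        positivity
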